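/- Let m > 1 be an integer. The map h/k ↦ h/(k−h) is an order-preserving bijection from F^{≤1/2}(B(2m),m) onto the Farey sequence F_m, and the map h/k ↦ h/(k+h) is its inverse, an order-preserving bijection from F_m onto F^{≤1/2}(B(2m),m). (Here h/k denotes a fraction in lowest terms.) -/

import Mathlib

/-- The Farey sequence `F_n` of order `n`, viewed as the set of rationals `q`
with `0 ≤ q ≤ 1` whose lowest-terms denominator is at most `n`. -/
def Farey (n : ℕ) : Set ℚ :=
  {q : ℚ | 0 ≤ q ∧ q ≤ 1 ∧ q.den ≤ n}

/-- The Farey subsequence `F(B(n),m)`: fractions `h/k ∈ F_n` in lowest terms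
with `h ≤ m` and `k - h ≤ n - m`. -/
def FareyB (n m : ℕ) : Set ℚ :=
  {q : ℚ | 0 ≤ q ∧ q ≤ 1 ∧ q.den ≤ n ∧ q.num ≤ (m : ℤ) ∧
    (q.den : ℤ) - q.num ≤ (n : ℤ) - (m : ℤ)}

/-- `f'` is the predecessor of `f` in the set `S` of rationals. -/
def IsPredIn (S : Set ℚ) (f' f : ℚ) : Prop :=
  f' ∈ S ∧ f ∈ S ∧ f' < f ∧ ∀ g ∈ S, ¬(f' < g ∧ g < f)

/-- `f'` is the successor of `f` in the set `S` of rationals. -/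
def IsSuccIn (S : Set ℚ) (f f' : ℚ) : Prop :=
  f ∈ S ∧ f' ∈ S ∧ f < f' ∧ ∀ g ∈ S, ¬(f < g ∧ g < f')

/-- The left halfsequence `F^{≤1/2}(B(2m),m)`. -/
def FareyBLeft (m : ℕ) : Set ℚ := {q ∈ FareyB (2 * m) m | q ≤ 1 / 2}

/-- On a fraction `q = h/k` in lowest terms, the map `h/k ↦ h/(k-h)`. -/
def phi (q : ℚ) : ℚ := (q.num : ℚ) / ((q.den : ℚ) - (q.num : ℚ))

/-- On a fraction `q = h/k` in lowest terms, the map `h/k ↦ h/(k+h)`. -/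
def psi (q : ℚ) : ℚ := (q.num : ℚ) / ((q.den : ℚ) + (q.num : ℚ))

lemma coprime_q (q : ℚ) : IsCoprime q.num (q.den : ℤ) := by
  rw [Int.isCoprime_iff_gcd_eq_one]
  exact q.reduced

lemma phi_num_den (q : ℚ) (h1 : q.num < (q.den : ℤ)) :
    (phi q).num = q.num ∧ ((phi q).den : ℤ) = (q.den : ℤ) - q.num := by
  have hb0 : (0:ℤ) < (q.den : ℤ) - q.num := by omega
  have hcop : IsCoprime q.num ((q.den : ℤ) - q.num) := by
    have := (coprime_q q).add_mul_right_right (-1)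
    simpa [mul_neg_one, ← sub_eq_add_neg] using this
  have hcop' : Nat.Coprime q.num.natAbs ((q.den : ℤ) - q.num).natAbs :=
    Int.isCoprime_iff_gcd_eq_one.mp hcop
  have hnum := Rat.num_div_eq_of_coprime hb0 hcop'
  have hden := Rat.den_div_eq_of_coprime hb0 hcop'
  constructor
  · rw [← hnum]; congr 1; unfold phi; push_cast; ring
  · rw [← hden]; congr 2; unfold phi; push_cast; ring

lemma psi_num_den (q : ℚ) (h1 : 0 ≤ q.num) :
    (psi q).num = q.num ∧ ((psi q).den : ℤ) = (q.den : ℤ) + q.num := by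
  have hd : (0:ℤ) < (q.den : ℤ) := by exact_mod_cast q.pos
  have hb0 : (0:ℤ) < (q.den : ℤ) + q.num := by omega
  have hcop : IsCoprime q.num ((q.den : ℤ) + q.num) := by
    have := (coprime_q q).add_mul_right_right 1
    simpa using this
  have hcop' : Nat.Coprime q.num.natAbs ((q.den : ℤ) + q.num).natAbs :=
    Int.isCoprime_iff_gcd_eq_one.mp hcop
  have hnum := Rat.num_div_eq_of_coprime hb0 hcop'
  have hden := Rat.den_div_eq_of_coprime hb0 hcop'
  constructor
  · rw [← hnum]; congr 1; unfold psi; push_cast; ring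
  · rw [← hden]; congr 2; unfold psi; push_cast; ring

lemma phi_eq (q : ℚ) (h : q < 1) : phi q = q / (1 - q) := by
  have hd : ((q.den : ℚ)) ≠ 0 := by exact_mod_cast q.den_ne_zero
  have hnum : (q.num : ℚ) = q * q.den := (div_eq_iff hd).mp (Rat.num_div_den q)
  have hlt : q.num < (q.den : ℤ) := Rat.lt_one_iff_num_lt_denom.mpr h
  have hden : (q.den:ℚ) - q.num ≠ 0 := by
    have : (q.num:ℚ) < q.den := by exact_mod_cast hlt
    intro hc; linarith
  have h1 : (1:ℚ) - q ≠ 0 := by intro hc; apply absurd h; simp; linarith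
  unfold phi
  rw [div_eq_div_iff hden h1, hnum]
  ring

lemma psi_eq (q : ℚ) (h : 0 ≤ q) : psi q = q / (1 + q) := by
  have hd : ((q.den : ℚ)) ≠ 0 := by exact_mod_cast q.den_ne_zero
  have hq : q = (q.num : ℚ) / (q.den : ℚ) := (Rat.num_div_den q).symm
  have h1 : (1:ℚ) + q ≠ 0 := by positivity
  have hnum : (q.num : ℚ) = q * q.den := (div_eq_iff hd).mp (Rat.num_div_den q)
  have hden : (q.den:ℚ) + q.num ≠ 0 := by
    have hdq : (0:ℚ) < q.den := by positivity
    have hn : (0:ℚ) ≤ q.num := by exact_mod_cast Rat.num_nonneg.mpr h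
    positivity
  unfold psi
  rw [div_eq_div_iff hden h1, hnum]
  ring

/-- For `m > 1`, the map `h/k ↦ h/(k-h)` is an order-preserving bijection from
`F^{≤1/2}(B(2m),m)` onto `F_m`, with order-preserving inverse `h/k ↦ h/(k+h)`. -/
theorem stmt_2 (m : ℕ) (hm : 1 < m) :
    (∀ q ∈ FareyBLeft m, phi q ∈ Farey m) ∧
    (∀ q ∈ Farey m, psi q ∈ FareyBLeft m) ∧
    (∀ q ∈ FareyBLeft m, psi (phi q) = q) ∧
    (∀ q ∈ Farey m, phi (psi q) = q) ∧
    (∀ q ∈ FareyBLeft m, ∀ q' ∈ FareyBLeft m, q < q' → phi q < phi q') ∧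
    (∀ q ∈ Farey m, ∀ q' ∈ Farey m, q < q' → psi q < psi q') := by
  -- basic facts
  have key : ∀ q ∈ FareyBLeft m, 2 * q.num ≤ (q.den : ℤ) ∧ 0 ≤ q.num ∧
      (q.den : ℤ) - q.num ≤ (m : ℤ) := by
    rintro q ⟨⟨h0, h1, hden, hnum, hsub⟩, hhalf⟩
    refine ⟨?_, Rat.num_nonneg.mpr h0, ?_⟩
    · have hdq : (0:ℚ) < q.den := by positivity
      have : (q.num : ℚ) / q.den ≤ 1 / 2 := by rw [Rat.num_div_den]; exact hhalf
      have h2 : q.num * 2 ≤ 1 * (q.den:ℤ) := by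
        exact_mod_cast (div_le_div_iff₀ hdq (by norm_num : (0:ℚ) < 2)).mp this
      omega
    · push_cast at hsub ⊢; linarith
  have keyF : ∀ q ∈ Farey m, 0 ≤ q.num ∧ q.num ≤ (q.den:ℤ) ∧ (q.den:ℤ) ≤ m := by
    rintro q ⟨h0, h1, hden⟩
    refine ⟨Rat.num_nonneg.mpr h0, ?_, by exact_mod_cast hden⟩
    have hdq : (0:ℚ) < q.den := by positivity
    have : (q.num : ℚ) / q.den ≤ 1 := by rw [Rat.num_div_den]; exact h1
    have := (div_le_one hdq).mp this
    exact_mod_cast this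
  have hltden : ∀ q ∈ FareyBLeft m, q.num < (q.den:ℤ) := by
    intro q hq
    obtain ⟨h2, h0, _⟩ := key q hq
    have : (0:ℤ) < q.den := by exact_mod_cast q.pos
    omega
  refine ⟨?_, ?_, ?_, ?_, ?_, ?_⟩
  · -- phi maps left halfsequence into Farey m
    intro q hq
    obtain ⟨h2, h0, hsub⟩ := key q hq
    obtain ⟨hn, hd⟩ := phi_num_den q (hltden q hq)
    have hd0 : (0:ℚ) < (q.den:ℚ) - q.num := by
      have := hltden q hq; push_cast; exact_mod_cast sub_pos.mpr (by exact_mod_cast this)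
    refine ⟨?_, ?_, ?_⟩
    · unfold phi; apply div_nonneg (by exact_mod_cast h0) hd0.le
    · unfold phi; rw [div_le_one hd0]
      have : (q.num:ℚ) ≤ (q.den:ℚ) - q.num := by
        have : q.num ≤ (q.den:ℤ) - q.num := by omega
        exact_mod_cast this
      linarith
    · have : ((phi q).den : ℤ) ≤ (m:ℤ) := by rw [hd]; exact hsub
      exact_mod_cast this
  · -- psi maps Farey m into left halfsequence
    intro q hq
    obtain ⟨h0, h1, hden⟩ := keyF q hq
    obtain ⟨hn, hd⟩ := psi_num_den q h0
    have hdq : (0:ℤ) < (q.den:ℤ) := by exact_mod_cast q.pos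
    have hd0 : (0:ℚ) < (q.den:ℚ) + q.num := by
      have : (0:ℤ) < (q.den:ℤ) + q.num := by omega
      exact_mod_cast this
    refine ⟨⟨?_, ?_, ?_, ?_, ?_⟩, ?_⟩
    · unfold psi; exact div_nonneg (by exact_mod_cast h0) hd0.le
    · unfold psi; rw [div_le_one hd0]
      have : (q.num:ℚ) ≤ (q.den:ℚ) := by exact_mod_cast h1
      have h0' : (0:ℚ) ≤ q.num := by exact_mod_cast h0
      have : (0:ℚ) < q.den := by positivity
      linarith
    · have : ((psi q).den : ℤ) ≤ ((2*m : ℕ) : ℤ) := by rw [hd]; push_cast; omega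
      exact_mod_cast this
    · rw [hn]; omega
    · rw [hn, hd]; push_cast; omega
    · unfold psi; rw [div_le_div_iff₀ hd0 (by norm_num : (0:ℚ) < 2)]
      have : (q.num:ℚ) ≤ (q.den:ℚ) := by exact_mod_cast h1
      linarith
  · -- psi ∘ phi = id
    intro q hq
    obtain ⟨hn, hd⟩ := phi_num_den q (hltden q hq)
    unfold psi
    rw [hn]
    have hdq : ((phi q).den : ℚ) = (q.den:ℚ) - q.num := by exact_mod_cast hd
    rw [hdq]
    rw [show ((q.den:ℚ) - q.num + q.num) = (q.den:ℚ) by ring]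
    exact Rat.num_div_den q
  · -- phi ∘ psi = id
    intro q hq
    obtain ⟨h0, h1, hden⟩ := keyF q hq
    obtain ⟨hn, hd⟩ := psi_num_den q h0
    unfold phi
    rw [hn]
    have hdq : ((psi q).den : ℚ) = (q.den:ℚ) + q.num := by exact_mod_cast hd
    rw [hdq]
    rw [show ((q.den:ℚ) + q.num - q.num) = (q.den:ℚ) by ring]
    exact Rat.num_div_den q
  · -- phi strictly monotone
    intro q hq q' hq' hlt
    have hq1 : q ≤ 1/2 := hq.2
    have hq1' : q' ≤ 1/2 := hq'.2
    rw [phi_eq q (by linarith), phi_eq q' (by linarith)]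
    rw [div_lt_div_iff₀ (by linarith) (by linarith)]
    nlinarith
  · -- psi strictly monotone
    intro q hq q' hq' hlt
    have h0 : (0:ℚ) ≤ q := hq.1
    have h0' : (0:ℚ) ≤ q' := hq'.1
    rw [psi_eq q h0, psi_eq q' h0']
    rw [div_lt_div_iff₀ (by linarith) (by linarith)]
    nlinarith
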